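/- For every t ∈ [0,1], the Lebesgue measure of the set {x ∈ (0,1] : {1/x} ≤ t} equals the sum of the convergent series Σ_{m=1}^∞ (1/m − 1/(m+t)). -/
import Mathlib


open MeasureTheory

/-- For `t ∈ [0,1]`, the Lebesgue measure of `{x ∈ (0,1] : {1/x} ≤ t}` equals
`Σ_{m=1}^∞ (1/m − 1/(m+t))`. -/
theorem volume_fract_inv_le (t : ℝ) (ht : t ∈ Set.Icc (0 : ℝ) 1) :
    volume {x : ℝ | x ∈ Set.Ioc (0 : ℝ) 1 ∧ Int.fract (1 / x) ≤ t}
      = ENNReal.ofReal (∑' m : ℕ, (1 / (m + 1 : ℝ) - 1 / ((m + 1 : ℝ) + t))) := by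
  obtain ⟨ht0, ht1⟩ := ht
  set a : ℕ → ℝ := fun m => 1 / ((m : ℝ) + 1 + t) with ha
  set b : ℕ → ℝ := fun m => 1 / ((m : ℝ) + 1) with hb
  have hden : ∀ m : ℕ, (0 : ℝ) < (m : ℝ) + 1 := fun m => by positivity
  have hdent : ∀ m : ℕ, (0 : ℝ) < (m : ℝ) + 1 + t := fun m => by
    have := hden m; linarith
  have hapos : ∀ m : ℕ, 0 < a m := fun m => div_pos one_pos (hdent m)
  have hab : ∀ m : ℕ, a m ≤ b m := by
    intro m
    exact one_div_le_one_div_of_le (hden m) (by linarith)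
  -- Step 1: identify the set
  have hset : {x : ℝ | x ∈ Set.Ioc (0 : ℝ) 1 ∧ Int.fract (1 / x) ≤ t}
      = ⋃ m : ℕ, Set.Icc (a m) (b m) := by
    ext x
    simp only [Set.mem_setOf_eq, Set.mem_iUnion, Set.mem_Icc, Set.mem_Ioc]
    constructor
    · rintro ⟨⟨hx0, hx1⟩, hf⟩
      have hy1 : (1 : ℝ) ≤ 1 / x := one_le_one_div hx0 hx1
      have hy0 : (0 : ℝ) < 1 / x := by linarith
      set n : ℤ := ⌊(1 : ℝ) / x⌋ with hn
      have hn1 : (1 : ℤ) ≤ n := Int.le_floor.mpr (by exact_mod_cast hy1)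
      have hcast : (((n - 1).toNat : ℕ) : ℝ) + 1 = (n : ℝ) := by
        have h1 : ((n - 1).toNat : ℤ) = n - 1 := Int.toNat_of_nonneg (by omega)
        have h2 := congrArg (fun z : ℤ => (z : ℝ)) h1
        push_cast at h2
        linarith
      have hfloor_le : (n : ℝ) ≤ 1 / x := Int.floor_le _
      have hle : 1 / x ≤ (n : ℝ) + t := by
        have h := hf
        rw [Int.fract, ← hn] at h
        linarith
      refine ⟨(n - 1).toNat, ?_, ?_⟩
      · rw [ha]
        simp only [hcast]
        calc 1 / ((n : ℝ) + t) ≤ 1 / (1 / x) := one_div_le_one_div_of_le hy0 hle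
          _ = x := by rw [one_div_one_div]
      · rw [hb]
        simp only [hcast]
        calc x = 1 / (1 / x) := by rw [one_div_one_div]
          _ ≤ 1 / (n : ℝ) :=
            one_div_le_one_div_of_le (by exact_mod_cast hn1.trans_lt' zero_lt_one) hfloor_le
    · rintro ⟨m, hxa, hxb⟩
      have hx0 : 0 < x := lt_of_lt_of_le (hapos m) hxa
      have hx1 : x ≤ 1 := hxb.trans (by
        rw [hb]
        simp only
        rw [div_le_one (hden m)]
        linarith)
      have hinv_lb : (m : ℝ) + 1 ≤ 1 / x := by
        have h := one_div_le_one_div_of_le hx0 hxb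
        rwa [hb, one_div_one_div] at h
      have hinv_ub : 1 / x ≤ (m : ℝ) + 1 + t := by
        have h := one_div_le_one_div_of_le (hapos m) hxa
        rwa [ha, one_div_one_div] at h
      refine ⟨⟨hx0, hx1⟩, ?_⟩
      rcases lt_or_ge (1 / x) ((m : ℝ) + 2) with hlt | hge
      · have hfl : ⌊(1 : ℝ) / x⌋ = (m : ℤ) + 1 := by
          rw [Int.floor_eq_iff]
          constructor
          · push_cast; linarith
          · push_cast; linarith
        rw [Int.fract, hfl]
        push_cast
        linarith
      · have heq : 1 / x = ((m + 2 : ℕ) : ℝ) := by push_cast; linarith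
        rw [heq, Int.fract_natCast]
        exact ht0
  rw [hset]
  -- Step 2: replace Icc union by Ioc union up to a null set
  have hsub1 : (⋃ m : ℕ, Set.Icc (a m) (b m))
      ⊆ (⋃ m : ℕ, Set.Ioc (a m) (b m)) ∪ Set.range a := by
    rintro x hx
    simp only [Set.mem_iUnion] at hx
    obtain ⟨m, hm1, hm2⟩ := hx
    rcases eq_or_lt_of_le hm1 with h | h
    · exact Or.inr ⟨m, h⟩
    · exact Or.inl (Set.mem_iUnion.mpr ⟨m, h, hm2⟩)
  have hsub2 : (⋃ m : ℕ, Set.Ioc (a m) (b m)) ⊆ ⋃ m : ℕ, Set.Icc (a m) (b m) :=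
    Set.iUnion_mono fun m => Set.Ioc_subset_Icc_self
  have hnull : volume (Set.range a) = 0 :=
    (Set.countable_range a).measure_zero _
  have hvol_eq : volume (⋃ m : ℕ, Set.Icc (a m) (b m))
      = volume (⋃ m : ℕ, Set.Ioc (a m) (b m)) := by
    refine le_antisymm ?_ (measure_mono hsub2)
    calc volume (⋃ m : ℕ, Set.Icc (a m) (b m))
        ≤ volume ((⋃ m : ℕ, Set.Ioc (a m) (b m)) ∪ Set.range a) := measure_mono hsub1
      _ ≤ volume (⋃ m : ℕ, Set.Ioc (a m) (b m)) + volume (Set.range a) := measure_union_le _ _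
      _ = volume (⋃ m : ℕ, Set.Ioc (a m) (b m)) := by rw [hnull, add_zero]
  rw [hvol_eq]
  -- Step 3: disjointness
  have key : ∀ i j : ℕ, i < j → Disjoint (Set.Ioc (a i) (b i)) (Set.Ioc (a j) (b j)) := by
    intro i j hlt
    have hkey : b j ≤ a i := by
      rw [ha, hb]
      apply one_div_le_one_div_of_le (hdent i)
      have : (i : ℝ) + 1 ≤ (j : ℝ) := by exact_mod_cast Nat.succ_le_of_lt hlt
      linarith
    apply Set.disjoint_left.mpr
    rintro x ⟨hx1, _⟩ ⟨_, hx4⟩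
    exact absurd (hx4.trans hkey) (not_le.mpr hx1)
  have hdisj : Pairwise (Function.onFun Disjoint fun m : ℕ => Set.Ioc (a m) (b m)) := by
    intro i j hij
    rcases hij.lt_or_gt with h | h
    · exact key i j h
    · exact (key j i h).symm
  rw [measure_iUnion hdisj (fun m => measurableSet_Ioc)]
  -- Step 4: compute the sum
  have hterm : ∀ m : ℕ, volume (Set.Ioc (a m) (b m))
      = ENNReal.ofReal (1 / ((m : ℝ) + 1) - 1 / (((m : ℝ) + 1) + t)) := by
    intro m
    rw [Real.volume_Ioc, ha, hb]
  simp_rw [hterm]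
  -- summability
  have hnn : ∀ m : ℕ, 0 ≤ 1 / ((m : ℝ) + 1) - 1 / (((m : ℝ) + 1) + t) := by
    intro m
    have h1 : 1 / ((m:ℝ)+1+t) ≤ 1 / ((m:ℝ)+1) :=
      one_div_le_one_div_of_le (hden m) (by linarith)
    linarith
  have hsum : Summable (fun m : ℕ => 1 / ((m : ℝ) + 1) - 1 / (((m : ℝ) + 1) + t)) := by
    have hsq : Summable (fun m : ℕ => 1 / ((m : ℝ) + 1) ^ 2) := by
      have h := Real.summable_one_div_nat_pow.mpr (le_refl 2)
      have h2 := (summable_nat_add_iff 1).mpr h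
      simpa using h2
    apply Summable.of_nonneg_of_le hnn _ hsq
    intro m
    have heq : 1 / ((m:ℝ)+1) - 1 / (((m:ℝ)+1)+t) = t / (((m:ℝ)+1) * ((m:ℝ)+1+t)) := by
      rw [div_sub_div _ _ (ne_of_gt (hden m)) (ne_of_gt (hdent m))]
      ring_nf
    rw [heq]
    have h1 : ((m:ℝ)+1)^2 ≤ ((m:ℝ)+1) * ((m:ℝ)+1+t) := by nlinarith [hden m]
    exact div_le_div₀ zero_le_one ht1 (by positivity) h1
  rw [ENNReal.ofReal_tsum_of_nonneg hnn hsum]
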